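/- Let G be a nilpotent group of nilpotency class c that is generated by d elements, with d ≥ 2. Then every subgroup H of G can be generated by at most d^c elements. -/

import Mathlib

open Subgroup
open scoped commutatorElement

theorem abelian_subgroup_gen {G : Type*} [Group G] (T : Finset G)
    (hcomm : ∀ x ∈ Subgroup.closure (T : Set G), ∀ y ∈ Subgroup.closure (T : Set G), Commute x y)
    (H : Subgroup G) (hH : H ≤ Subgroup.closure (T : Set G)) :
    ∃ S : Finset G, (S : Set G) ⊆ H ∧ S.card ≤ T.card ∧ Subgroup.closure (S : Set G) = H := by
  classical
  obtain ⟨n, hn⟩ : ∃ n, T.card = n := ⟨_, rfl⟩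
  induction n generalizing T H with
  | zero =>
    refine ⟨∅, by simp, by simp, ?_⟩
    rw [Finset.card_eq_zero] at hn
    subst hn
    simp only [Finset.coe_empty, Subgroup.closure_empty] at hH ⊢
    exact le_antisymm bot_le hH
  | succ n ih =>
    obtain ⟨t, ht⟩ : T.Nonempty := Finset.card_pos.mp (by omega)
    set T' : Finset G := T.erase t with hT'
    have hT'le : Subgroup.closure (T' : Set G) ≤ Subgroup.closure (T : Set G) :=
      Subgroup.closure_mono (by exact_mod_cast Finset.erase_subset t T)
    have htmem : (t : G) ∈ Subgroup.closure (T : Set G) :=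
      Subgroup.subset_closure ht
    -- decomposition
    have hdec : ∀ x ∈ Subgroup.closure (T : Set G),
        ∃ (k : ℤ) (a : G), a ∈ Subgroup.closure (T' : Set G) ∧ x = t ^ k * a := by
      intro x hx
      induction hx using Subgroup.closure_induction with
      | mem x hx =>
        rcases eq_or_ne x t with rfl | hne
        · exact ⟨1, 1, one_mem _, by simp⟩
        · exact ⟨0, x, Subgroup.subset_closure (Finset.mem_erase.mpr ⟨hne, hx⟩), by simp⟩
      | one => exact ⟨0, 1, one_mem _, by simp⟩
      | mul x y hx hy hx' hy' =>
        obtain ⟨k, a, ha, rfl⟩ := hx'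
        obtain ⟨l, b, hb, rfl⟩ := hy'
        refine ⟨k + l, a * b, mul_mem ha hb, ?_⟩
        have h1 : Commute a (t ^ l) := hcomm _ (hT'le ha) _ (zpow_mem htmem l)
        rw [zpow_add]
        simp only [mul_assoc]
        rw [← mul_assoc (t ^ l) a b, ← h1.eq, mul_assoc a]
      | inv x hx hx' =>
        obtain ⟨k, a, ha, rfl⟩ := hx'
        refine ⟨-k, a⁻¹, inv_mem ha, ?_⟩
        have h1 : Commute a⁻¹ (t ^ (-k)) := hcomm _ (hT'le (inv_mem ha)) _ (zpow_mem htmem _)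
        rw [mul_inv_rev, ← zpow_neg]
        exact h1.eq
    -- the exponent subgroup of ℤ
    let E : AddSubgroup ℤ :=
      { carrier := { k | ∃ a ∈ Subgroup.closure (T' : Set G), t ^ k * a ∈ H }
        zero_mem' := ⟨1, one_mem _, by simpa using one_mem H⟩
        add_mem' := by
          rintro k l ⟨a, ha, hka⟩ ⟨b, hb, hlb⟩
          refine ⟨a * b, mul_mem ha hb, ?_⟩
          have h1 : Commute a (t ^ l) := hcomm _ (hT'le ha) _ (zpow_mem htmem l)
          have : t ^ (k + l) * (a * b) = (t ^ k * a) * (t ^ l * b) := by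
            rw [zpow_add]
            simp only [mul_assoc]
            rw [← mul_assoc (t ^ l) a b, ← h1.eq, mul_assoc a]
          rw [this]; exact mul_mem hka hlb
        neg_mem' := by
          rintro k ⟨a, ha, hka⟩
          refine ⟨a⁻¹, inv_mem ha, ?_⟩
          have h1 : Commute a⁻¹ (t ^ (-k)) := hcomm _ (hT'le (inv_mem ha)) _ (zpow_mem htmem _)
          have : t ^ (-k) * a⁻¹ = (t ^ k * a)⁻¹ := by
            rw [mul_inv_rev, ← zpow_neg]
            exact h1.eq.symm
          rw [this]; exact inv_mem hka }
    obtain ⟨k₀, hk₀⟩ := Int.subgroup_cyclic E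
    have hk₀E : k₀ ∈ E := by rw [hk₀]; exact AddSubgroup.subset_closure rfl
    obtain ⟨a₀, ha₀, hha₀⟩ := hk₀E
    set h : G := t ^ k₀ * a₀ with hh
    -- induction hypothesis for H ⊓ closure T'
    obtain ⟨S', hS'sub, hS'card, hS'cl⟩ :=
      ih T' (fun x hx y hy => hcomm x (hT'le hx) y (hT'le hy)) (H ⊓ Subgroup.closure (T' : Set G))
        inf_le_right (by simp [hT', Finset.card_erase_of_mem ht, hn])
    refine ⟨insert h S', ?_, ?_, ?_⟩
    · rw [Finset.coe_insert]
      exact Set.insert_subset hha₀ (hS'sub.trans (fun x hx => hx.1))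
    · have hT'card : T'.card = n := by simp [hT', Finset.card_erase_of_mem ht, hn]
      calc (insert h S').card ≤ S'.card + 1 := Finset.card_insert_le _ _
        _ ≤ T.card := by omega
    · apply le_antisymm
      · rw [Finset.coe_insert, Subgroup.closure_le]
        exact Set.insert_subset hha₀ (hS'sub.trans (fun x hx => hx.1))
      · intro x hx
        obtain ⟨k, a, ha, rfl⟩ := hdec x (hH hx)
        have hkE : k ∈ E := ⟨a, ha, hx⟩
        rw [hk₀, AddSubgroup.mem_closure_singleton] at hkE
        obtain ⟨m, hm⟩ := hkE
        rw [smul_eq_mul] at hm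
        have hcomm₀ : Commute (t ^ k₀) a₀ := hcomm _ (zpow_mem htmem _) _ (hT'le ha₀)
        have hpow : h ^ m = t ^ k * a₀ ^ m := by
          rw [hh, hcomm₀.mul_zpow, ← zpow_mul, mul_comm k₀ m, hm]
        have hmem1 : h ^ m ∈ Subgroup.closure ((insert h S' : Finset G) : Set G) :=
          zpow_mem (Subgroup.subset_closure (by simp)) m
        have hv : a * (a₀ ^ m)⁻¹ ∈ Subgroup.closure (T' : Set G) :=
          mul_mem ha (inv_mem (zpow_mem ha₀ m))
        have hu : Commute (t ^ k) (a * (a₀ ^ m)⁻¹) :=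
          hcomm _ (zpow_mem htmem _) _ (hT'le hv)
        have heq : (t ^ k * a) * (h ^ m)⁻¹ = a * (a₀ ^ m)⁻¹ := by
          calc (t ^ k * a) * (h ^ m)⁻¹
              = t ^ k * (a * (a₀ ^ m)⁻¹) * (t ^ k)⁻¹ := by
                rw [hpow, mul_inv_rev]; simp only [mul_assoc]
            _ = a * (a₀ ^ m)⁻¹ := by rw [hu.eq, mul_inv_cancel_right]
        have hrest : (t ^ k * a) * (h ^ m)⁻¹ ∈ H ⊓ Subgroup.closure (T' : Set G) :=
          Subgroup.mem_inf.mpr ⟨mul_mem hx (inv_mem (zpow_mem hha₀ m)), by rw [heq]; exact hv⟩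
        have hmem2 : (t ^ k * a) * (h ^ m)⁻¹ ∈ Subgroup.closure ((insert h S' : Finset G) : Set G) := by
          rw [← hS'cl] at hrest
          exact Subgroup.closure_mono (by simp [Finset.coe_insert]) hrest
        have := mul_mem hmem2 hmem1
        rwa [inv_mul_cancel_right] at this


theorem commutator_gen_step {G : Type*} [Group G] (A : Set G) (hA : Subgroup.closure A = ⊤)
    (K : Subgroup G) [K.Normal] (W : Set G) (hWK : W ⊆ (K : Set G))
    (hK : K ≤ Subgroup.closure W ⊔ ⁅K, (⊤ : Subgroup G)⁆) :
    ⁅K, (⊤ : Subgroup G)⁆ ≤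
      Subgroup.closure ((fun p : G × G => ⁅p.1, p.2⁆) '' (W ×ˢ A)) ⊔
        ⁅⁅K, (⊤ : Subgroup G)⁆, (⊤ : Subgroup G)⁆ := by
  set L : Subgroup G := Subgroup.closure ((fun p : G × G => ⁅p.1, p.2⁆) '' (W ×ˢ A)) ⊔
        ⁅⁅K, (⊤ : Subgroup G)⁆, (⊤ : Subgroup G)⁆ with hLdef
  have hDL : ⁅⁅K, (⊤ : Subgroup G)⁆, (⊤ : Subgroup G)⁆ ≤ L := le_sup_right
  have hD : ∀ x ∈ ⁅K, (⊤ : Subgroup G)⁆, ∀ g : G, ⁅x, g⁆ ∈ L := fun x hx g =>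
    hDL (Subgroup.commutator_mem_commutator hx (Subgroup.mem_top g))
  have hKmem : ∀ x ∈ K, ∀ g : G, ⁅x, g⁆ ∈ ⁅K, (⊤ : Subgroup G)⁆ := fun x hx g =>
    Subgroup.commutator_mem_commutator hx (Subgroup.mem_top g)
  have stepA : ∀ w ∈ W, ∀ g : G, ⁅w, g⁆ ∈ L := by
    intro w hw g
    have hwK : w ∈ K := hWK hw
    have hg : g ∈ Subgroup.closure A := by rw [hA]; exact Subgroup.mem_top g
    induction hg using Subgroup.closure_induction with
    | mem a ha =>
      exact (le_sup_left : Subgroup.closure ((fun p : G × G => ⁅p.1, p.2⁆) '' (W ×ˢ A)) ≤ L)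
        (Subgroup.subset_closure ⟨(w, a), Set.mk_mem_prod hw ha, rfl⟩)
    | one => rw [commutatorElement_one_right]; exact one_mem L
    | mul g h hg hh ihg ihh =>
      have key : ⁅w, g * h⁆ = ⁅w, g⁆ * ⁅w, h⁆ * ⁅⁅w, h⁆⁻¹, g⁆ := by group
      rw [key]
      exact mul_mem (mul_mem ihg ihh) (hD _ (inv_mem (hKmem w hwK h)) g)
    | inv g hg ihg =>
      have key : ⁅w, g⁻¹⁆ = ⁅w, g⁆⁻¹ * ⁅⁅w, g⁆, g⁻¹⁆ := by group
      rw [key]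
      exact mul_mem (inv_mem ihg) (hD _ (hKmem w hwK g) g⁻¹)
  have stepB : ∀ k ∈ K, ∀ g : G, ⁅k, g⁆ ∈ L := by
    intro k hk
    have hk' : k ∈ Subgroup.closure (W ∪ (⁅K, (⊤ : Subgroup G)⁆ : Subgroup G)) := by
      have h1 := hK hk
      rw [Subgroup.closure_union, Subgroup.closure_eq]
      exact h1
    suffices h : k ∈ K ∧ ∀ g : G, ⁅k, g⁆ ∈ L from h.2
    clear hk
    induction hk' using Subgroup.closure_induction with
    | mem x hx =>
      rcases hx with hx | hx
      · exact ⟨hWK hx, stepA x hx⟩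
      · exact ⟨Subgroup.commutator_le_left K ⊤ hx, fun g => hD x hx g⟩
    | one => exact ⟨one_mem K, fun g => by rw [commutatorElement_one_left]; exact one_mem L⟩
    | mul x y hx hy ihx ihy =>
      refine ⟨mul_mem ihx.1 ihy.1, fun g => ?_⟩
      have key : ⁅x * y, g⁆ = ⁅y, g⁆ * ⁅⁅y, g⁆⁻¹, x⁆ * ⁅x, g⁆ := by group
      rw [key]
      exact mul_mem (mul_mem (ihy.2 g) (hD _ (inv_mem (hKmem y ihy.1 g)) x)) (ihx.2 g)
    | inv x hx ihx =>
      refine ⟨inv_mem ihx.1, fun g => ?_⟩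
      have key : ⁅x⁻¹, g⁆ = ⁅x, g⁆⁻¹ * ⁅⁅x, g⁆, x⁻¹⁆ := by group
      rw [key]
      exact mul_mem (inv_mem (ihx.2 g)) (hD _ (hKmem x ihx.1 g) x⁻¹)
  exact Subgroup.commutator_le.mpr fun k hk g _ => stepB k hk g


noncomputable def Wfun {G : Type*} [Group G] [DecidableEq G] (A : Finset G) : ℕ → Finset G
  | 0 => A
  | 1 => ((A ×ˢ A).filter fun p => p.1 ≠ p.2).image fun p => ⁅p.1, p.2⁆
  | (j + 2) => ((Wfun A (j + 1) ×ˢ A).image) fun p => ⁅p.1, p.2⁆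

theorem Wfun_subset {G : Type*} [Group G] [DecidableEq G] (A : Finset G) :
    ∀ j, (Wfun A j : Set G) ⊆ ((⊤ : Subgroup G).lowerCentralSeries j : Set G)
  | 0 => by simp [Wfun, Subgroup.lowerCentralSeries_zero]
  | 1 => by
    intro x hx
    simp only [Wfun, Finset.coe_image, Set.mem_image, Finset.mem_coe, Finset.mem_filter] at hx
    obtain ⟨⟨a, b⟩, _, rfl⟩ := hx
    exact Subgroup.commutator_mem_commutator (Subgroup.mem_top a) (Subgroup.mem_top b)
  | (j + 2) => by
    intro x hx
    simp only [Wfun, Finset.coe_image, Set.mem_image, Finset.mem_coe, Finset.mem_product] at hx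
    obtain ⟨⟨w, a⟩, ⟨hw, _⟩, rfl⟩ := hx
    rw [Subgroup.lowerCentralSeries_succ]
    exact Subgroup.commutator_mem_commutator (Wfun_subset A (j + 1) hw) (Subgroup.mem_top a)

theorem Wfun_gen {G : Type*} [Group G] [DecidableEq G] (A : Finset G) (hA : Subgroup.closure (A : Set G) = ⊤) :
    ∀ j, (⊤ : Subgroup G).lowerCentralSeries j ≤
      Subgroup.closure (Wfun A j : Set G) ⊔ (⊤ : Subgroup G).lowerCentralSeries (j + 1) := by
  have hs : ∀ n : ℕ, (⊤ : Subgroup G).lowerCentralSeries (n + 1) =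
      ⁅(⊤ : Subgroup G).lowerCentralSeries n, (⊤ : Subgroup G)⁆ := fun n => rfl
  intro j
  induction j with
  | zero =>
    rw [Subgroup.lowerCentralSeries_zero]
    exact le_sup_left.trans_eq' (by rw [Wfun, hA])
  | succ j ih =>
    have key := commutator_gen_step (A : Set G) hA ((⊤ : Subgroup G).lowerCentralSeries j)
      (Wfun A j : Set G) (Wfun_subset A j)
      (by rw [← hs j]; exact ih)
    rw [← hs j, ← hs (j + 1)] at key
    refine key.trans (sup_le_sup ?_ le_rfl)
    rw [Subgroup.closure_le]
    rintro x ⟨⟨w, a⟩, ⟨hw, ha⟩, rfl⟩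
    simp only [Finset.mem_coe] at hw ha
    cases j with
    | zero =>
      by_cases hab : w = a
      · subst hab; simp only [commutatorElement_self, SetLike.mem_coe]; exact one_mem _
      · have hw' : w ∈ A := hw
        refine Subgroup.subset_closure ?_
        simp only [Wfun, Finset.mem_coe, Finset.mem_image]
        exact ⟨(w, a), by simp [Finset.mem_filter, Finset.mem_product, hw', ha, hab], rfl⟩
    | succ j =>
      refine Subgroup.subset_closure ?_
      simp only [Wfun, Finset.mem_coe, Finset.mem_image]
      exact ⟨(w, a), by simp [Finset.mem_product, hw, ha], rfl⟩

theorem Wfun_card {G : Type*} [Group G] [DecidableEq G] (A : Finset G) {d : ℕ} (hd : A.card ≤ d) :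
    ∀ j, (Wfun A (j + 1)).card ≤ (d * d - d) * d ^ j := by
  intro j
  induction j with
  | zero =>
    have h1 : A.card ≤ (((A ×ˢ A).filter fun p => p.1 = p.2)).card := by
      classical
      calc A.card = (A.image fun a => (a, a)).card :=
            (Finset.card_image_of_injective _ (fun a b h => by
              simpa using congrArg Prod.fst h)).symm
        _ ≤ _ := Finset.card_le_card (by
            intro p hp
            simp only [Finset.mem_image] at hp
            obtain ⟨a, ha, rfl⟩ := hp
            simp [Finset.mem_filter, Finset.mem_product, ha])
    have h2 := Finset.card_filter_add_card_filter_not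
      (s := A ×ˢ A) (p := fun p => p.1 = p.2)
    rw [Finset.card_product] at h2
    have h3 : (Wfun A 1).card ≤ (((A ×ˢ A).filter fun p => ¬ p.1 = p.2)).card := by
      classical
      simpa [Wfun] using Finset.card_image_le
        (s := (A ×ˢ A).filter fun p => p.1 ≠ p.2) (f := fun p => ⁅p.1, p.2⁆)
    have h4 : A.card * A.card - A.card ≤ d * d - d := by
      have := Nat.mul_le_mul hd (Nat.sub_le_sub_right hd 1)
      have e1 : A.card * (A.card - 1) = A.card * A.card - A.card := Nat.mul_sub_one _ _ ▸ rfl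
      have e2 : d * (d - 1) = d * d - d := Nat.mul_sub_one _ _ ▸ rfl
      omega
    have h5 : (d * d - d) * d ^ 0 = d * d - d := by rw [pow_zero, mul_one]
    show (Wfun A 1).card ≤ (d * d - d) * d ^ 0
    omega
  | succ j ih =>
    have h1 : (Wfun A (j + 2)).card ≤ (Wfun A (j + 1)).card * A.card := by
      simpa [Wfun, Finset.card_product] using Finset.card_image_le
        (s := Wfun A (j + 1) ×ˢ A) (f := fun p => ⁅p.1, p.2⁆)
    calc (Wfun A (j + 2)).card ≤ (Wfun A (j + 1)).card * A.card := h1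
      _ ≤ ((d * d - d) * d ^ j) * d := Nat.mul_le_mul ih hd
      _ = (d * d - d) * d ^ (j + 1) := by ring


theorem lcs_map_surjective {G G' : Type*} [Group G] [Group G'] (f : G →* G')
    (hf : Function.Surjective f) (n : ℕ) :
    ((⊤ : Subgroup G).lowerCentralSeries n).map f = (⊤ : Subgroup G').lowerCentralSeries n := by
  induction n with
  | zero =>
    simpa [Subgroup.lowerCentralSeries_zero] using Subgroup.map_top_of_surjective f hf
  | succ n ih =>
    show (⁅(⊤ : Subgroup G).lowerCentralSeries n, (⊤ : Subgroup G)⁆ : Subgroup G).map f =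
      ⁅(⊤ : Subgroup G').lowerCentralSeries n, (⊤ : Subgroup G')⁆
    rw [Subgroup.map_commutator, ih, Subgroup.map_top_of_surjective f hf]

universe u

theorem main_ind (d : ℕ) (hd : 2 ≤ d) : ∀ (c : ℕ) (G : Type u) [Group G] (A : Finset G),
    Subgroup.closure (A : Set G) = ⊤ → A.card ≤ d → (⊤ : Subgroup G).lowerCentralSeries c = ⊥ →
    ∀ H : Subgroup G, ∃ S : Finset G, (S : Set G) ⊆ H ∧ S.card ≤ d ^ c ∧
      Subgroup.closure (S : Set G) = H := by
  intro c
  induction c with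
  | zero =>
    intro G _ A hA hcard hclass H
    refine ⟨∅, by simp, by simp, ?_⟩
    have h1 : ∀ x : G, x ∈ (⊥ : Subgroup G) := fun x => hclass ▸ Subgroup.mem_top x
    simp only [Finset.coe_empty, Subgroup.closure_empty]
    exact le_antisymm bot_le (fun x _ => h1 x)
  | succ c ih =>
    intro G _ A hA hcard hclass H
    rcases Nat.eq_zero_or_pos c with rfl | hc
    · -- abelian case
      have hcomm : ∀ x ∈ Subgroup.closure (A : Set G), ∀ y ∈ Subgroup.closure (A : Set G),
          Commute x y := by
        intro x _ y _
        have h0 : ⁅x, y⁆ ∈ ⁅(⊤ : Subgroup G), (⊤ : Subgroup G)⁆ :=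
          Subgroup.commutator_mem_commutator (Subgroup.mem_top x) (Subgroup.mem_top y)
        have h1 : ⁅x, y⁆ ∈ (⊤ : Subgroup G).lowerCentralSeries 1 := h0
        rw [hclass, Subgroup.mem_bot] at h1
        exact commutatorElement_eq_one_iff_commute.mp h1
      obtain ⟨S, h1, h2, h3⟩ := abelian_subgroup_gen A hcomm H (by rw [hA]; exact le_top)
      exact ⟨S, h1, by simpa using h2.trans hcard, h3⟩
    · letI := Classical.decEq G
      set N := (⊤ : Subgroup G).lowerCentralSeries c with hN
      haveI hNnormal : N.Normal := Subgroup.lowerCentralSeries_normal _ c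
      have hcentral : ∀ n ∈ N, ∀ g : G, Commute n g := by
        intro n hn g
        have h0 : ⁅n, g⁆ ∈ ⁅(⊤ : Subgroup G).lowerCentralSeries c, (⊤ : Subgroup G)⁆ :=
          Subgroup.commutator_mem_commutator hn (Subgroup.mem_top g)
        have h1 : ⁅n, g⁆ ∈ (⊤ : Subgroup G).lowerCentralSeries (c + 1) := h0
        rw [hclass, Subgroup.mem_bot] at h1
        exact commutatorElement_eq_one_iff_commute.mp h1
      letI := Classical.decEq (G ⧸ N)
      set π := QuotientGroup.mk' N with hπdef
      have hπ : Function.Surjective π := QuotientGroup.mk'_surjective N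
      have hAQ : Subgroup.closure ((A.image π : Finset (G ⧸ N)) : Set (G ⧸ N)) = ⊤ := by
        rw [Finset.coe_image, ← MonoidHom.map_closure, hA, Subgroup.map_top_of_surjective π hπ]
      have hclassQ : (⊤ : Subgroup (G ⧸ N)).lowerCentralSeries c = ⊥ := by
        rw [← lcs_map_surjective π hπ c, ← hN, Subgroup.map_eq_bot_iff, QuotientGroup.ker_mk']
      obtain ⟨S', hS'sub, hS'card, hS'cl⟩ := ih (G ⧸ N) (A.image π) hAQ
        (Finset.card_image_le.trans hcard) hclassQ (H.map π)
      have hlift : ∀ s : {x // x ∈ S'}, ∃ g : G, g ∈ H ∧ π g = s.1 := by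
        rintro ⟨s, hs⟩
        rcases Subgroup.mem_map.mp (hS'sub hs) with ⟨g, hg, hgs⟩
        exact ⟨g, hg, hgs⟩
      choose f hfH hfπ using hlift
      set S₁ : Finset G := S'.attach.image f with hS₁
      have hS₁H : (S₁ : Set G) ⊆ (H : Set G) := by
        intro x hx
        simp only [hS₁, Finset.coe_image, Set.mem_image, Finset.mem_coe, Finset.mem_attach] at hx
        obtain ⟨s, _, rfl⟩ := hx
        exact hfH s
      have hS₁card : S₁.card ≤ S'.card :=
        Finset.card_image_le.trans (by simp)
      have hπS₁ : π '' (S₁ : Set G) = (S' : Set (G ⧸ N)) := by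
        apply Set.Subset.antisymm
        · rintro y ⟨x, hx, rfl⟩
          simp only [hS₁, Finset.coe_image, Set.mem_image, Finset.mem_coe] at hx
          obtain ⟨s, _, rfl⟩ := hx
          rw [hfπ s]
          exact s.2
        · rintro y hy
          refine ⟨f ⟨y, hy⟩, ?_, hfπ _⟩
          simp only [hS₁, Finset.coe_image]
          exact Set.mem_image_of_mem f (by simp)
      obtain ⟨c', rfl⟩ : ∃ c', c = c' + 1 := ⟨c - 1, by omega⟩
      have hWgen : Subgroup.closure ((Wfun A (c' + 1) : Finset G) : Set G) = N := by
        apply le_antisymm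
        · rw [Subgroup.closure_le]
          exact Wfun_subset A (c' + 1)
        · have h2 := Wfun_gen A hA (c' + 1)
          rwa [hclass, sup_bot_eq] at h2
      have hcommW : ∀ x ∈ Subgroup.closure ((Wfun A (c' + 1) : Finset G) : Set G),
          ∀ y ∈ Subgroup.closure ((Wfun A (c' + 1) : Finset G) : Set G), Commute x y := by
        intro x hx y _
        exact hcentral x (hWgen ▸ hx) y
      obtain ⟨S₂, hS₂sub, hS₂card, hS₂cl⟩ := abelian_subgroup_gen (Wfun A (c' + 1)) hcommW
        (H ⊓ N) (by rw [hWgen]; exact inf_le_right)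
      have hS₂H : (S₂ : Set G) ⊆ (H : Set G) := hS₂sub.trans (fun x hx => hx.1)
      refine ⟨S₁ ∪ S₂, ?_, ?_, ?_⟩
      · rw [Finset.coe_union]
        exact Set.union_subset hS₁H hS₂H
      · have hb := (Wfun_card A hcard c').trans_eq' rfl
        have hS₂b : S₂.card ≤ (d * d - d) * d ^ c' := hS₂card.trans hb
        have e1 : (d * d - d) * d ^ c' = d * d * d ^ c' - d * d ^ c' := Nat.sub_mul _ _ _
        have e2 : d * d * d ^ c' = d ^ (c' + 1 + 1) := by ring
        have e3 : d * d ^ c' = d ^ (c' + 1) := by ring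
        have e4 : d ^ (c' + 1) ≤ d ^ (c' + 1 + 1) :=
          Nat.pow_le_pow_right (by omega) (by omega)
        have hcu : (S₁ ∪ S₂).card ≤ S₁.card + S₂.card := Finset.card_union_le _ _
        omega
      · apply le_antisymm
        · rw [Subgroup.closure_le, Finset.coe_union]
          exact Set.union_subset hS₁H hS₂H
        · intro x hx
          have hπx : π x ∈ Subgroup.closure (S' : Set (G ⧸ N)) := by
            rw [hS'cl]
            exact ⟨x, hx, rfl⟩
          rw [← hπS₁, ← MonoidHom.map_closure] at hπx
          obtain ⟨y, hy, hyx⟩ := Subgroup.mem_map.mp hπx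
          have hyH : y ∈ H := (Subgroup.closure_le H).mpr hS₁H hy
          have hxy : x * y⁻¹ ∈ N := by
            have h5 : π (x * y⁻¹) = 1 := by
              rw [map_mul, map_inv, hyx]
              exact mul_inv_cancel _
            rw [← QuotientGroup.ker_mk' N, MonoidHom.mem_ker]
            exact h5
          have h6 : x * y⁻¹ ∈ H ⊓ N :=
            Subgroup.mem_inf.mpr ⟨mul_mem hx (inv_mem hyH), hxy⟩
          rw [← hS₂cl] at h6
          have h7 : x = (x * y⁻¹) * y := by group
          rw [h7]
          exact mul_mem
            (Subgroup.closure_mono (by rw [Finset.coe_union]; exact Set.subset_union_right) h6)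
            (Subgroup.closure_mono (by rw [Finset.coe_union]; exact Set.subset_union_left) hy)

/-- If `G` is a nilpotent group of nilpotency class `c` generated by at most `d ≥ 2`
elements, then every subgroup `H` of `G` can be generated by at most `d ^ c` elements. -/
theorem stmt_0 {G : Type*} [Group G] [Group.FG G] (c d : ℕ) (hd : 2 ≤ d)
    (hclass : (⊤ : Subgroup G).lowerCentralSeries c = ⊥) (hgen : Group.rank G ≤ d)
    (H : Subgroup G) :
    ∃ S : Finset G, (S : Set G) ⊆ H ∧ S.card ≤ d ^ c ∧ Subgroup.closure (S : Set G) = H := by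
  obtain ⟨A, hAcard, hAtop⟩ := Group.rank_spec G
  exact main_ind d hd c G A hAtop (hAcard.trans_le hgen) hclass H
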